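/- Let H, W, k be positive integers with k ∣ H and k ∣ W, let w : ℤ → ℤ → ℂ be an arbitrary interpolation kernel, and let X : ℤ → ℤ → ℂ be an image. Define the k-fold down-sampled image D(X)(x',y') := Σ_{s=0}^{k-1} Σ_{t=0}^{k-1} w(s,t)·X(kx'+s, ky'+t). Then for every integer u with -H/k ≤ u ≤ H/k - 1 and every integer v with -W/k ≤ v ≤ W/k - 1, the 2D discrete Fourier transform of D(X) on the 2(H/k)×2(W/k) grid is the linear combination F_{D(X)}(u,v) = Σ_{u'=-H}^{H-1} Σ_{v'=-W}^{W-1} α(u,v,u',v')·F_X(u',v'), where the coefficient α(u,v,u',v') equals β(u',v')/k² if (2H/k) ∣ (u'-u) and (2W/k) ∣ (v'-v), and equals 0 otherwise, with β(u',v') := Σ_{s=0}^{k-1} Σ_{t=0}^{k-1} w(s,t)·exp(2πi(u's/(2H) + v't/(2W))), and F_X is the 2D discrete Fourier transform of X on the 2H×2W grid. -/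

import Mathlib

/-- The 2D discrete Fourier transform of an image `Z : ℤ → ℤ → ℂ` on the `2M × 2N` grid:
`F_Z(u,v) = ∑_{x=-M}^{M-1} ∑_{y=-N}^{N-1} Z(x,y)·exp(-2πi(ux/(2M) + vy/(2N)))`. -/
noncomputable def dft (M N : ℤ) (Z : ℤ → ℤ → ℂ) (u v : ℤ) : ℂ :=
  ∑ x ∈ Finset.Icc (-M) (M - 1), ∑ y ∈ Finset.Icc (-N) (N - 1),
    Z x y * Complex.exp (-(2 * (Real.pi : ℂ) * Complex.I) *
      ((u : ℂ) * (x : ℂ) / (2 * (M : ℂ)) + (v : ℂ) * (y : ℂ) / (2 * (N : ℂ))))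

/-- The `k`-fold down-sampled image with interpolation kernel `w`:
`D(X)(x',y') = ∑_{s=0}^{k-1} ∑_{t=0}^{k-1} w(s,t)·X(kx'+s, ky'+t)`. -/
noncomputable def downsample (k : ℤ) (w X : ℤ → ℤ → ℂ) (x' y' : ℤ) : ℂ :=
  ∑ s ∈ Finset.Icc (0 : ℤ) (k - 1), ∑ t ∈ Finset.Icc (0 : ℤ) (k - 1),
    w s t * X (k * x' + s) (k * y' + t)

/-- The frequency response of the kernel `w` on the `2H × 2W` grid:
`β(u',v') = ∑_{s=0}^{k-1} ∑_{t=0}^{k-1} w(s,t)·exp(2πi(u's/(2H) + v't/(2W)))`. -/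
noncomputable def beta (H W k : ℤ) (w : ℤ → ℤ → ℂ) (u' v' : ℤ) : ℂ :=
  ∑ s ∈ Finset.Icc (0 : ℤ) (k - 1), ∑ t ∈ Finset.Icc (0 : ℤ) (k - 1),
    w s t * Complex.exp ((2 * (Real.pi : ℂ) * Complex.I) *
      ((u' : ℂ) * (s : ℂ) / (2 * (H : ℂ)) + (v' : ℂ) * (t : ℂ) / (2 * (W : ℂ))))


private lemma expsum (n : ℤ) (hn : 0 < n) (m : ℤ) :
    ∑ j ∈ Finset.Icc (-n) (n - 1),
      Complex.exp (2 * (Real.pi : ℂ) * Complex.I * ((m : ℂ) * (j : ℂ) / (2 * (n : ℂ))))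
      = if (2 * n) ∣ m then (2 * (n : ℂ)) else 0 := by
  have hn0 : (n : ℂ) ≠ 0 := Int.cast_ne_zero.mpr (by omega)
  have h2 : (2 * (Real.pi : ℂ) * Complex.I) ≠ 0 :=
    mul_ne_zero (mul_ne_zero two_ne_zero (Complex.ofReal_ne_zero.mpr Real.pi_ne_zero)) Complex.I_ne_zero
  set ζ : ℂ := Complex.exp (2 * (Real.pi : ℂ) * Complex.I * m / (2 * n)) with hζ
  have hζne : ζ ≠ 0 := Complex.exp_ne_zero _
  have hterm : ∀ j : ℤ, Complex.exp (2 * (Real.pi : ℂ) * Complex.I * ((m : ℂ) * (j : ℂ) / (2 * (n : ℂ)))) = ζ ^ j := by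
    intro j
    rw [hζ, ← Complex.exp_int_mul]
    congr 1
    ring
  have hmap : Finset.Icc (-n) (n - 1)
      = Finset.map ⟨fun i : ℕ => -n + (i : ℤ), (show Function.Injective (fun i : ℕ => -n + (i : ℤ)) from by intro a b h; dsimp at h; omega)⟩ (Finset.range (2 * n).toNat) := by
    ext j
    simp only [Finset.mem_Icc, Finset.mem_map, Finset.mem_range, Function.Embedding.coeFn_mk]
    constructor
    · intro h
      exact ⟨(j + n).toNat, by omega, by omega⟩
    · rintro ⟨i, hi, rfl⟩
      omega
  have h2n : (((2 * n).toNat : ℕ) : ℂ) = 2 * (n : ℂ) := by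
    have h' : ((2 * n).toNat : ℤ) = 2 * n := Int.toNat_of_nonneg (by omega)
    exact_mod_cast congrArg (fun z : ℤ => (z : ℂ)) h'
  have hzpow : ζ ^ ((2 * n : ℤ)) = 1 := by
    rw [hζ, ← Complex.exp_int_mul]
    rw [show ((2 * n : ℤ) : ℂ) * (2 * (Real.pi : ℂ) * Complex.I * m / (2 * n)) = (m : ℂ) * (2 * Real.pi * Complex.I) by push_cast; field_simp]
    exact Complex.exp_int_mul_two_pi_mul_I m
  simp only [hterm, hmap, Finset.sum_map, Function.Embedding.coeFn_mk]
  have hsplit : ∀ i : ℕ, ζ ^ (-n + (i : ℤ)) = ζ ^ (-n) * ζ ^ i := by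
    intro i
    rw [zpow_add₀ hζne, zpow_natCast]
  simp only [hsplit, ← Finset.mul_sum]
  by_cases hd : (2 * n) ∣ m
  · have hζ1 : ζ = 1 := by
      obtain ⟨q, rfl⟩ := hd
      rw [hζ, show 2 * (Real.pi : ℂ) * Complex.I * ((2 * n * q : ℤ) : ℂ) / (2 * n) = (q : ℂ) * (2 * Real.pi * Complex.I) by push_cast; field_simp]
      exact Complex.exp_int_mul_two_pi_mul_I q
    rw [if_pos hd]
    simp only [hζ1, one_zpow, one_pow, one_mul, Finset.sum_const, Finset.card_range, nsmul_eq_mul, mul_one]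
    exact h2n
  · have hζ1 : ζ ≠ 1 := by
      intro h
      rw [hζ, Complex.exp_eq_one_iff] at h
      obtain ⟨q, hq⟩ := h
      have hm : (m : ℂ) = q * (2 * n) := by
        have h' : 2 * (Real.pi : ℂ) * Complex.I * m = 2 * Real.pi * Complex.I * (q * (2 * n)) := by
          field_simp at hq
          linear_combination (2 * (Real.pi : ℂ) * Complex.I) * hq
        exact mul_left_cancel₀ h2 h'
      have hm' : m = q * (2 * n) := by exact_mod_cast hm
      exact hd ⟨q, by rw [hm']; ring⟩
    rw [geom_sum_eq hζ1]
    have hz : ζ ^ (2 * n).toNat = 1 := by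
      rw [← zpow_natCast, Int.toNat_of_nonneg (by omega : (0 : ℤ) ≤ 2 * n)]
      exact hzpow
    rw [hz]
    simp [if_neg hd]


private lemma sum_comm3 {α : Type*} [AddCommMonoid α] {A B C : Finset ℤ} (f : ℤ → ℤ → ℤ → α) :
    ∑ a ∈ A, ∑ b ∈ B, ∑ c ∈ C, f a b c = ∑ c ∈ C, ∑ a ∈ A, ∑ b ∈ B, f a b c :=
  (Finset.sum_congr rfl fun _ _ => Finset.sum_comm).trans Finset.sum_comm

private lemma sum_reorder4 {α : Type*} [AddCommMonoid α] {A B C D : Finset ℤ}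
    (f : ℤ → ℤ → ℤ → ℤ → α) :
    ∑ a ∈ A, ∑ b ∈ B, ∑ c ∈ C, ∑ d ∈ D, f a b c d
      = ∑ c ∈ C, ∑ d ∈ D, ∑ a ∈ A, ∑ b ∈ B, f a b c d := by
  rw [sum_comm3 (fun a b c => ∑ d ∈ D, f a b c d)]
  exact Finset.sum_congr rfl fun c _ => sum_comm3 _

private lemma sum_reorder6 {α : Type*} [AddCommMonoid α] {A B C D E G : Finset ℤ}
    (f : ℤ → ℤ → ℤ → ℤ → ℤ → ℤ → α) :
    ∑ a ∈ A, ∑ b ∈ B, ∑ c ∈ C, ∑ d ∈ D, ∑ e ∈ E, ∑ g ∈ G, f a b c d e g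
      = ∑ e ∈ E, ∑ g ∈ G, ∑ a ∈ A, ∑ b ∈ B, ∑ c ∈ C, ∑ d ∈ D, f a b c d e g := by
  have h1 : ∑ a ∈ A, ∑ b ∈ B, ∑ c ∈ C, ∑ d ∈ D, ∑ e ∈ E, ∑ g ∈ G, f a b c d e g
      = ∑ a ∈ A, ∑ b ∈ B, ∑ e ∈ E, ∑ g ∈ G, ∑ c ∈ C, ∑ d ∈ D, f a b c d e g :=
    Finset.sum_congr rfl fun a _ => Finset.sum_congr rfl fun b _ => sum_reorder4 _
  rw [h1]
  exact sum_reorder4 (fun a b e g => ∑ c ∈ C, ∑ d ∈ D, f a b c d e g)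

private lemma factor2c {A B : Finset ℤ} (cst : ℂ) (g h : ℤ → ℂ) :
    ∑ a ∈ A, ∑ b ∈ B, cst * g a * h b = cst * (∑ a ∈ A, g a) * ∑ b ∈ B, h b := by
  rw [mul_assoc, Finset.sum_mul_sum, Finset.mul_sum]
  exact Finset.sum_congr rfl fun a _ => by
    rw [Finset.mul_sum]
    exact Finset.sum_congr rfl fun b _ => by ring

private lemma factor4c {A B C D : Finset ℤ} (cst : ℂ) (g h : ℤ → ℂ) (f : ℤ → ℤ → ℂ) :
    ∑ x ∈ A, ∑ y ∈ B, ∑ s ∈ C, ∑ t ∈ D, cst * g x * h y * f s t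
      = cst * (∑ x ∈ A, g x) * (∑ y ∈ B, h y) * ∑ s ∈ C, ∑ t ∈ D, f s t := by
  have h1 : ∀ x y : ℤ, ∑ s ∈ C, ∑ t ∈ D, cst * g x * h y * f s t
      = (cst * g x * h y) * ∑ s ∈ C, ∑ t ∈ D, f s t := by
    intro x y
    rw [Finset.mul_sum]
    refine Finset.sum_congr rfl fun s _ => ?_
    rw [Finset.mul_sum]
  calc ∑ x ∈ A, ∑ y ∈ B, ∑ s ∈ C, ∑ t ∈ D, cst * g x * h y * f s t
      = ∑ x ∈ A, ∑ y ∈ B, (cst * g x * h y) * ∑ s ∈ C, ∑ t ∈ D, f s t :=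
        Finset.sum_congr rfl fun x _ => Finset.sum_congr rfl fun y _ => h1 x y
    _ = ∑ x ∈ A, ∑ y ∈ B, (cst * ∑ s ∈ C, ∑ t ∈ D, f s t) * g x * h y :=
        Finset.sum_congr rfl fun x _ => Finset.sum_congr rfl fun y _ => by ring
    _ = (cst * ∑ s ∈ C, ∑ t ∈ D, f s t) * (∑ x ∈ A, g x) * ∑ y ∈ B, h y := factor2c _ _ _
    _ = cst * (∑ x ∈ A, g x) * (∑ y ∈ B, h y) * ∑ s ∈ C, ∑ t ∈ D, f s t := by ring

private lemma inv_dft (H W : ℤ) (hH : 0 < H) (hW : 0 < W) (X : ℤ → ℤ → ℂ) (x y : ℤ)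
    (hx1 : -H ≤ x) (hx2 : x ≤ H - 1) (hy1 : -W ≤ y) (hy2 : y ≤ W - 1) :
    X x y = (4 * (H : ℂ) * (W : ℂ))⁻¹ *
      ∑ u' ∈ Finset.Icc (-H) (H - 1), ∑ v' ∈ Finset.Icc (-W) (W - 1),
        dft H W X u' v' * Complex.exp (2 * (Real.pi : ℂ) * Complex.I *
          ((u' : ℂ) * (x : ℂ) / (2 * (H : ℂ)) + (v' : ℂ) * (y : ℂ) / (2 * (W : ℂ)))) := by
  have hH0 : (H : ℂ) ≠ 0 := Int.cast_ne_zero.mpr (by omega)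
  have hW0 : (W : ℂ) ≠ 0 := Int.cast_ne_zero.mpr (by omega)
  have key : (∑ u' ∈ Finset.Icc (-H) (H - 1), ∑ v' ∈ Finset.Icc (-W) (W - 1),
        dft H W X u' v' * Complex.exp (2 * (Real.pi : ℂ) * Complex.I *
          ((u' : ℂ) * (x : ℂ) / (2 * (H : ℂ)) + (v' : ℂ) * (y : ℂ) / (2 * (W : ℂ)))))
      = 4 * (H : ℂ) * (W : ℂ) * X x y := by
    calc (∑ u' ∈ Finset.Icc (-H) (H - 1), ∑ v' ∈ Finset.Icc (-W) (W - 1),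
        dft H W X u' v' * Complex.exp (2 * (Real.pi : ℂ) * Complex.I *
          ((u' : ℂ) * (x : ℂ) / (2 * (H : ℂ)) + (v' : ℂ) * (y : ℂ) / (2 * (W : ℂ)))))
        = ∑ u' ∈ Finset.Icc (-H) (H - 1), ∑ v' ∈ Finset.Icc (-W) (W - 1),
            ∑ x₀ ∈ Finset.Icc (-H) (H - 1), ∑ y₀ ∈ Finset.Icc (-W) (W - 1),
              X x₀ y₀
                * Complex.exp (2 * (Real.pi : ℂ) * Complex.I * (((x - x₀ : ℤ) : ℂ) * (u' : ℂ) / (2 * (H : ℂ))))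
                * Complex.exp (2 * (Real.pi : ℂ) * Complex.I * (((y - y₀ : ℤ) : ℂ) * (v' : ℂ) / (2 * (W : ℂ)))) := by
          refine Finset.sum_congr rfl fun u' _ => Finset.sum_congr rfl fun v' _ => ?_
          rw [dft, Finset.sum_mul]
          refine Finset.sum_congr rfl fun x₀ _ => ?_
          rw [Finset.sum_mul]
          refine Finset.sum_congr rfl fun y₀ _ => ?_
          have hexp : Complex.exp (-(2 * (Real.pi : ℂ) * Complex.I) *
                ((u' : ℂ) * (x₀ : ℂ) / (2 * (H : ℂ)) + (v' : ℂ) * (y₀ : ℂ) / (2 * (W : ℂ))))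
              * Complex.exp (2 * (Real.pi : ℂ) * Complex.I *
                ((u' : ℂ) * (x : ℂ) / (2 * (H : ℂ)) + (v' : ℂ) * (y : ℂ) / (2 * (W : ℂ))))
              = Complex.exp (2 * (Real.pi : ℂ) * Complex.I * (((x - x₀ : ℤ) : ℂ) * (u' : ℂ) / (2 * (H : ℂ))))
                * Complex.exp (2 * (Real.pi : ℂ) * Complex.I * (((y - y₀ : ℤ) : ℂ) * (v' : ℂ) / (2 * (W : ℂ)))) := by
            rw [← Complex.exp_add, ← Complex.exp_add]
            congr 1
            push_cast
            field_simp
            ring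
          linear_combination X x₀ y₀ * hexp
      _ = ∑ x₀ ∈ Finset.Icc (-H) (H - 1), ∑ y₀ ∈ Finset.Icc (-W) (W - 1),
            ∑ u' ∈ Finset.Icc (-H) (H - 1), ∑ v' ∈ Finset.Icc (-W) (W - 1),
              X x₀ y₀
                * Complex.exp (2 * (Real.pi : ℂ) * Complex.I * (((x - x₀ : ℤ) : ℂ) * (u' : ℂ) / (2 * (H : ℂ))))
                * Complex.exp (2 * (Real.pi : ℂ) * Complex.I * (((y - y₀ : ℤ) : ℂ) * (v' : ℂ) / (2 * (W : ℂ)))) :=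
          sum_reorder4 _
      _ = ∑ x₀ ∈ Finset.Icc (-H) (H - 1), ∑ y₀ ∈ Finset.Icc (-W) (W - 1),
            X x₀ y₀ * (if (2 * H) ∣ (x - x₀) then (2 * (H : ℂ)) else 0)
              * (if (2 * W) ∣ (y - y₀) then (2 * (W : ℂ)) else 0) := by
          refine Finset.sum_congr rfl fun x₀ _ => Finset.sum_congr rfl fun y₀ _ => ?_
          rw [factor2c, expsum H hH (x - x₀), expsum W hW (y - y₀)]
      _ = ∑ x₀ ∈ Finset.Icc (-H) (H - 1), ∑ y₀ ∈ Finset.Icc (-W) (W - 1),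
            X x₀ y₀ * (if x₀ = x then (2 * (H : ℂ)) else 0)
              * (if y₀ = y then (2 * (W : ℂ)) else 0) := by
          refine Finset.sum_congr rfl fun x₀ hx₀ => Finset.sum_congr rfl fun y₀ hy₀ => ?_
          simp only [Finset.mem_Icc] at hx₀ hy₀
          have e1 : (2 * H) ∣ (x - x₀) ↔ x₀ = x := by
            constructor
            · intro hd
              have := Int.eq_zero_of_abs_lt_dvd hd (abs_lt.mpr ⟨by omega, by omega⟩)
              omega
            · rintro rfl; simp
          have e2 : (2 * W) ∣ (y - y₀) ↔ y₀ = y := by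
            constructor
            · intro hd
              have := Int.eq_zero_of_abs_lt_dvd hd (abs_lt.mpr ⟨by omega, by omega⟩)
              omega
            · rintro rfl; simp
          rw [if_congr e1 rfl rfl, if_congr e2 rfl rfl]
      _ = 4 * (H : ℂ) * (W : ℂ) * X x y := by
          rw [Finset.sum_eq_single_of_mem x (by simp [Finset.mem_Icc]; omega)
            (fun b _ hb => Finset.sum_eq_zero fun y₀ _ => by simp [hb])]
          rw [Finset.sum_eq_single_of_mem y (by simp [Finset.mem_Icc]; omega)
            (fun b _ hb => by simp [hb])]
          simp
          ring
  rw [key]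
  field_simp

set_option maxHeartbeats 2000000 in
/-- The DFT of the `k`-fold down-sampled image at a low frequency `(u,v)` is a linear
combination of the spectral values `F_X(u',v')` of the original image over the whole frequency
grid `[-H, H-1] × [-W, W-1]`, with coefficient `α(u,v,u',v') = β(u',v')/k²` when
`(2H/k) ∣ (u'-u)` and `(2W/k) ∣ (v'-v)`, and `0` otherwise. -/
theorem stmt_2 (H W k : ℤ) (hH : 0 < H) (hW : 0 < W) (hk : 0 < k)
    (hkH : k ∣ H) (hkW : k ∣ W) (w : ℤ → ℤ → ℂ) (X : ℤ → ℤ → ℂ) :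
    ∀ u v : ℤ, -(H / k) ≤ u → u ≤ H / k - 1 → -(W / k) ≤ v → v ≤ W / k - 1 →
      dft (H / k) (W / k) (downsample k w X) u v =
        ∑ u' ∈ Finset.Icc (-H) (H - 1), ∑ v' ∈ Finset.Icc (-W) (W - 1),
          (if (2 * (H / k)) ∣ (u' - u) ∧ (2 * (W / k)) ∣ (v' - v)
            then beta H W k w u' v' / (k : ℂ) ^ 2 else 0) * dft H W X u' v' := by
  intro u v hu1 hu2 hv1 hv2
  set M := H / k with hMdef
  set N := W / k with hNdef
  have hkM : k * M = H := Int.mul_ediv_cancel' hkH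
  have hkN : k * N = W := Int.mul_ediv_cancel' hkW
  have hM : 0 < M := by nlinarith
  have hN : 0 < N := by nlinarith
  have hH0 : (H : ℂ) ≠ 0 := Int.cast_ne_zero.mpr (by omega)
  have hW0 : (W : ℂ) ≠ 0 := Int.cast_ne_zero.mpr (by omega)
  have hk0 : (k : ℂ) ≠ 0 := Int.cast_ne_zero.mpr (by omega)
  have hM0 : (M : ℂ) ≠ 0 := Int.cast_ne_zero.mpr (by omega)
  have hN0 : (N : ℂ) ≠ 0 := Int.cast_ne_zero.mpr (by omega)
  have hHC : (H : ℂ) = (k : ℂ) * (M : ℂ) := by exact_mod_cast congrArg (fun z : ℤ => (z : ℂ)) hkM.symm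
  have hWC : (W : ℂ) = (k : ℂ) * (N : ℂ) := by exact_mod_cast congrArg (fun z : ℤ => (z : ℂ)) hkN.symm
  calc dft M N (downsample k w X) u v
      = ∑ x' ∈ Finset.Icc (-M) (M - 1), ∑ y' ∈ Finset.Icc (-N) (N - 1),
          ∑ s ∈ Finset.Icc (0 : ℤ) (k - 1), ∑ t ∈ Finset.Icc (0 : ℤ) (k - 1),
            w s t * X (k * x' + s) (k * y' + t) *
              Complex.exp (-(2 * (Real.pi : ℂ) * Complex.I) *
                ((u : ℂ) * (x' : ℂ) / (2 * (M : ℂ)) + (v : ℂ) * (y' : ℂ) / (2 * (N : ℂ)))) := by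
        simp only [dft, downsample, Finset.sum_mul]
    _ = ∑ x' ∈ Finset.Icc (-M) (M - 1), ∑ y' ∈ Finset.Icc (-N) (N - 1),
          ∑ s ∈ Finset.Icc (0 : ℤ) (k - 1), ∑ t ∈ Finset.Icc (0 : ℤ) (k - 1),
            ∑ u' ∈ Finset.Icc (-H) (H - 1), ∑ v' ∈ Finset.Icc (-W) (W - 1),
              (4 * (H : ℂ) * (W : ℂ))⁻¹ * dft H W X u' v'
                * Complex.exp (2 * (Real.pi : ℂ) * Complex.I * (((u' - u : ℤ) : ℂ) * (x' : ℂ) / (2 * (M : ℂ))))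
                * Complex.exp (2 * (Real.pi : ℂ) * Complex.I * (((v' - v : ℤ) : ℂ) * (y' : ℂ) / (2 * (N : ℂ))))
                * (w s t * Complex.exp ((2 * (Real.pi : ℂ) * Complex.I) *
                    ((u' : ℂ) * (s : ℂ) / (2 * (H : ℂ)) + (v' : ℂ) * (t : ℂ) / (2 * (W : ℂ))))) := by
        refine Finset.sum_congr rfl fun x' hx' => Finset.sum_congr rfl fun y' hy' =>
          Finset.sum_congr rfl fun s hs => Finset.sum_congr rfl fun t ht => ?_
        simp only [Finset.mem_Icc] at hx' hy' hs ht
        rw [inv_dft H W hH hW X (k * x' + s) (k * y' + t)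
          (by nlinarith [mul_nonneg hk.le (show (0:ℤ) ≤ x' + M by omega)])
          (by nlinarith [mul_nonneg hk.le (show (0:ℤ) ≤ M - 1 - x' by omega)])
          (by nlinarith [mul_nonneg hk.le (show (0:ℤ) ≤ y' + N by omega)])
          (by nlinarith [mul_nonneg hk.le (show (0:ℤ) ≤ N - 1 - y' by omega)])]
        simp only [Finset.mul_sum, Finset.sum_mul]
        refine Finset.sum_congr rfl fun u' _ => Finset.sum_congr rfl fun v' _ => ?_
        have hexp : Complex.exp (2 * (Real.pi : ℂ) * Complex.I *
              ((u' : ℂ) * ((k * x' + s : ℤ) : ℂ) / (2 * (H : ℂ)) + (v' : ℂ) * ((k * y' + t : ℤ) : ℂ) / (2 * (W : ℂ))))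
            * Complex.exp (-(2 * (Real.pi : ℂ) * Complex.I) *
              ((u : ℂ) * (x' : ℂ) / (2 * (M : ℂ)) + (v : ℂ) * (y' : ℂ) / (2 * (N : ℂ))))
            = Complex.exp (2 * (Real.pi : ℂ) * Complex.I * (((u' - u : ℤ) : ℂ) * (x' : ℂ) / (2 * (M : ℂ))))
              * Complex.exp (2 * (Real.pi : ℂ) * Complex.I * (((v' - v : ℤ) : ℂ) * (y' : ℂ) / (2 * (N : ℂ))))
              * Complex.exp ((2 * (Real.pi : ℂ) * Complex.I) *
                  ((u' : ℂ) * (s : ℂ) / (2 * (H : ℂ)) + (v' : ℂ) * (t : ℂ) / (2 * (W : ℂ)))) := by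
          rw [← Complex.exp_add, ← Complex.exp_add, ← Complex.exp_add]
          congr 1
          push_cast
          rw [hHC, hWC]
          field_simp
          ring
        linear_combination (w s t * (4 * (H : ℂ) * (W : ℂ))⁻¹ * dft H W X u' v') * hexp
    _ = ∑ u' ∈ Finset.Icc (-H) (H - 1), ∑ v' ∈ Finset.Icc (-W) (W - 1),
          ∑ x' ∈ Finset.Icc (-M) (M - 1), ∑ y' ∈ Finset.Icc (-N) (N - 1),
          ∑ s ∈ Finset.Icc (0 : ℤ) (k - 1), ∑ t ∈ Finset.Icc (0 : ℤ) (k - 1),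
              (4 * (H : ℂ) * (W : ℂ))⁻¹ * dft H W X u' v'
                * Complex.exp (2 * (Real.pi : ℂ) * Complex.I * (((u' - u : ℤ) : ℂ) * (x' : ℂ) / (2 * (M : ℂ))))
                * Complex.exp (2 * (Real.pi : ℂ) * Complex.I * (((v' - v : ℤ) : ℂ) * (y' : ℂ) / (2 * (N : ℂ))))
                * (w s t * Complex.exp ((2 * (Real.pi : ℂ) * Complex.I) *
                    ((u' : ℂ) * (s : ℂ) / (2 * (H : ℂ)) + (v' : ℂ) * (t : ℂ) / (2 * (W : ℂ))))) :=
        sum_reorder6 _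
    _ = ∑ u' ∈ Finset.Icc (-H) (H - 1), ∑ v' ∈ Finset.Icc (-W) (W - 1),
          (4 * (H : ℂ) * (W : ℂ))⁻¹ * dft H W X u' v'
            * (∑ x' ∈ Finset.Icc (-M) (M - 1),
                Complex.exp (2 * (Real.pi : ℂ) * Complex.I * (((u' - u : ℤ) : ℂ) * (x' : ℂ) / (2 * (M : ℂ)))))
            * (∑ y' ∈ Finset.Icc (-N) (N - 1),
                Complex.exp (2 * (Real.pi : ℂ) * Complex.I * (((v' - v : ℤ) : ℂ) * (y' : ℂ) / (2 * (N : ℂ)))))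
            * beta H W k w u' v' := by
        refine Finset.sum_congr rfl fun u' _ => Finset.sum_congr rfl fun v' _ => ?_
        rw [beta]
        exact factor4c ((4 * (H : ℂ) * (W : ℂ))⁻¹ * dft H W X u' v') _ _ _
    _ = ∑ u' ∈ Finset.Icc (-H) (H - 1), ∑ v' ∈ Finset.Icc (-W) (W - 1),
          (4 * (H : ℂ) * (W : ℂ))⁻¹ * dft H W X u' v'
            * (if (2 * M) ∣ (u' - u) then (2 * (M : ℂ)) else 0)
            * (if (2 * N) ∣ (v' - v) then (2 * (N : ℂ)) else 0)
            * beta H W k w u' v' := by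
        refine Finset.sum_congr rfl fun u' _ => Finset.sum_congr rfl fun v' _ => ?_
        rw [expsum M hM (u' - u), expsum N hN (v' - v)]
    _ = ∑ u' ∈ Finset.Icc (-H) (H - 1), ∑ v' ∈ Finset.Icc (-W) (W - 1),
          (if (2 * M) ∣ (u' - u) ∧ (2 * N) ∣ (v' - v)
            then beta H W k w u' v' / (k : ℂ) ^ 2 else 0) * dft H W X u' v' := by
        refine Finset.sum_congr rfl fun u' _ => Finset.sum_congr rfl fun v' _ => ?_
        by_cases h1 : (2 * M) ∣ (u' - u) <;> by_cases h2 : (2 * N) ∣ (v' - v)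
        · rw [if_pos h1, if_pos h2, if_pos ⟨h1, h2⟩]
          rw [hHC, hWC]
          field_simp
          ring
        · rw [if_pos h1, if_neg h2, if_neg (by tauto)]; ring
        · rw [if_neg h1, if_pos h2, if_neg (by tauto)]; ring
        · rw [if_neg h1, if_neg h2, if_neg (by tauto)]; ring
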